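/- Let C be a first-order clause (without equality) blocked by a literal L in F, and let F' and F_C be finite sets of ground instances of clauses of F \ {C} and of C, respectively. Then every propositional assignment satisfying F' can be modified (by repeatedly flipping ground instances of the atom of L) into a propositional assignment satisfying F' ∪ F_C. -/

import Mathlib

/-- First-order terms over variables `V` and function symbols `Fn`. -/
inductive Term (V Fn : Type) : Type
  | var : V → Term V Fn
  | app : Fn → List (Term V Fn) → Term V Fn

/-- A substitution maps variables to terms. -/
abbrev Subst (V Fn : Type) := V → Term V Fn

/-- Applying a substitution to a term. -/
def Term.subst {V Fn : Type} (σ : Subst V Fn) : Term V Fn → Term V Fn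
  | .var v => σ v
  | .app f ts => .app f (ts.attach.map (fun t => Term.subst σ t.1))
  decreasing_by have := List.sizeOf_lt_of_mem t.2; simp at *; omega

/-- The set of variables occurring in a term. -/
def Term.vars {V Fn : Type} : Term V Fn → Set V
  | .var v => {v}
  | .app _ ts => {x | ∃ t ∈ ts.attach, x ∈ Term.vars t.1}
  decreasing_by have := List.sizeOf_lt_of_mem t.2; simp at *; omega

/-- A term is ground if it contains no variables. -/
def Term.IsGround {V Fn : Type} (t : Term V Fn) : Prop := t.vars = ∅

/-- Composition of substitutions: `σ.comp γ` is "first σ, then γ". -/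
def Subst.comp {V Fn : Type} (σ γ : Subst V Fn) : Subst V Fn :=
  fun v => (σ v).subst γ

/-- An atom: a predicate symbol applied to a list of argument terms. -/
structure Atom (V Fn P : Type) where
  pred : P
  args : List (Term V Fn)

/-- A literal: an atom with a polarity (`true` = positive). -/
structure Lit (V Fn P : Type) where
  pol : Bool
  atom : Atom V Fn P

/-- The complement of a literal. -/
def Lit.compl {V Fn P : Type} (l : Lit V Fn P) : Lit V Fn P := ⟨!l.pol, l.atom⟩

def Atom.subst {V Fn P : Type} (σ : Subst V Fn) (A : Atom V Fn P) : Atom V Fn P :=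
  ⟨A.pred, A.args.map (Term.subst σ)⟩

def Lit.subst {V Fn P : Type} (σ : Subst V Fn) (l : Lit V Fn P) : Lit V Fn P :=
  ⟨l.pol, l.atom.subst σ⟩

/-- A clause is a multiset (disjunction) of literals. -/
abbrev Clause (V Fn P : Type) := Multiset (Lit V Fn P)

def Clause.subst {V Fn P : Type} (σ : Subst V Fn) (C : Clause V Fn P) : Clause V Fn P :=
  C.map (Lit.subst σ)

def Atom.vars {V Fn P : Type} (A : Atom V Fn P) : Set V := {x | ∃ t ∈ A.args, x ∈ t.vars}
def Lit.vars {V Fn P : Type} (l : Lit V Fn P) : Set V := l.atom.vars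
def Clause.vars {V Fn P : Type} (C : Clause V Fn P) : Set V := {x | ∃ l ∈ C, x ∈ l.vars}

/-- A clause is ground if it contains no variables. -/
def Clause.IsGround {V Fn P : Type} (C : Clause V Fn P) : Prop := C.vars = ∅

/-- A substitution `σ` unifies a list of literals if it maps them all to the same literal. -/
def IsUnifier {V Fn P : Type} (σ : Subst V Fn) (ls : List (Lit V Fn P)) : Prop :=
  ∀ l₁ ∈ ls, ∀ l₂ ∈ ls, l₁.subst σ = l₂.subst σ

/-- A most general unifier: every unifier factors through it. -/
def IsMGU {V Fn P : Type} (σ : Subst V Fn) (ls : List (Lit V Fn P)) : Prop :=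
  IsUnifier σ ls ∧ ∀ τ, IsUnifier τ ls → ∃ γ, σ.comp γ = τ

/-- Validity of an equality-free clause: it contains a complementary pair of literals. -/
def Clause.ValidEF {V Fn P : Type} (C : Clause V Fn P) : Prop :=
  ∃ A : Atom V Fn P, (⟨true, A⟩ : Lit V Fn P) ∈ C ∧ (⟨false, A⟩ : Lit V Fn P) ∈ C

/-- `C` (written as `L ∨ C'`) is blocked by `L` in `F`: all `L`-resolvents with clauses
of `F \ {L ∨ C'}` are valid. -/
def BlockedEF {V Fn P : Type} (L : Lit V Fn P) (C' : Clause V Fn P)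
    (F : Set (Clause V Fn P)) : Prop :=
  ∀ D ∈ F, D ≠ L ::ₘ C' → ∀ Ns Drest : Clause V Fn P, Ns + Drest = D → Ns ≠ 0 →
    ∀ σ : Subst V Fn, IsMGU σ (L :: (Ns.map Lit.compl).toList) →
      Clause.ValidEF (C'.subst σ + Drest.subst σ)

/-- A propositional assignment on (ground) atoms. -/
abbrev PAssign (V Fn P : Type) := Atom V Fn P → Bool

def litTrue {V Fn P : Type} (α : PAssign V Fn P) (l : Lit V Fn P) : Prop :=
  α l.atom = l.pol

/-- Propositional satisfaction of a (ground) clause. -/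
def satC {V Fn P : Type} (α : PAssign V Fn P) (C : Clause V Fn P) : Prop :=
  ∃ l ∈ C, litTrue α l

/-- A first-order interpretation. -/
structure Interp (Fn P : Type) : Type 1 where
  dom : Type
  nonempty : Nonempty dom
  fn : Fn → List dom → dom
  pr : P → List dom → Prop

def Term.eval {V Fn P : Type} (I : Interp Fn P) (ρ : V → I.dom) : Term V Fn → I.dom
  | .var v => ρ v
  | .app f ts => I.fn f (ts.attach.map (fun t => Term.eval I ρ t.1))
  decreasing_by have := List.sizeOf_lt_of_mem t.2; simp at *; omega

def litHolds {V Fn P : Type} (I : Interp Fn P) (ρ : V → I.dom) (l : Lit V Fn P) : Prop :=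
  l.pol = true ↔ I.pr l.atom.pred (l.atom.args.map (Term.eval I ρ))

def clauseHolds {V Fn P : Type} (I : Interp Fn P) (ρ : V → I.dom) (C : Clause V Fn P) : Prop :=
  ∃ l ∈ C, litHolds I ρ l

/-- First-order satisfiability of a CNF formula (clauses implicitly universally quantified). -/
def SatEF {V Fn P : Type} (F : Set (Clause V Fn P)) : Prop :=
  ∃ I : Interp Fn P, ∀ C ∈ F, ∀ ρ : V → I.dom, clauseHolds I ρ C


open Classical in
/-- Flip the truth value of the atom `A0`. -/
noncomputable def flipAtom {V Fn P : Type} (α : PAssign V Fn P) (A0 : Atom V Fn P) :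
    PAssign V Fn P :=
  fun A => if A = A0 then !(α A) else α A

namespace Term
variable {V Fn : Type}

theorem ind {motive : Term V Fn → Prop} (hvar : ∀ v, motive (.var v))
    (happ : ∀ f ts, (∀ t ∈ ts, motive t) → motive (.app f ts)) : ∀ t, motive t
  | .var v => hvar v
  | .app f ts => happ f ts (fun t _ => ind hvar happ t)
  decreasing_by have := List.sizeOf_lt_of_mem (by assumption); simp at *; omega

@[simp] theorem subst_var (σ : Subst V Fn) (v : V) : (Term.var v).subst σ = σ v := by
  simp [Term.subst]

@[simp] theorem subst_app (σ : Subst V Fn) (f : Fn) (ts : List (Term V Fn)) :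
    (Term.app f ts).subst σ = .app f (ts.map (Term.subst σ)) := by
  rw [Term.subst]; simp [List.attach_map_val]

@[simp] theorem vars_var (v : V) : (Term.var v : Term V Fn).vars = {v} := by
  simp [Term.vars]

theorem mem_vars_app {x : V} {f : Fn} {ts : List (Term V Fn)} :
    x ∈ (Term.app f ts).vars ↔ ∃ t ∈ ts, x ∈ t.vars := by
  rw [Term.vars]; constructor
  · rintro ⟨t, _, h⟩; exact ⟨t.1, t.2, h⟩
  · rintro ⟨t, ht, h⟩; exact ⟨⟨t, ht⟩, List.mem_attach _ _, h⟩

theorem subst_subst (σ γ : Subst V Fn) (t : Term V Fn) :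
    (t.subst σ).subst γ = t.subst (σ.comp γ) := by
  induction t using Term.ind with
  | hvar v => simp [Subst.comp]
  | happ f ts ih => simp only [subst_app, List.map_map]; congr 1
                    exact List.map_congr_left fun t ht => ih t ht

theorem subst_congr {σ σ' : Subst V Fn} {t : Term V Fn}
    (h : ∀ v ∈ t.vars, σ v = σ' v) : t.subst σ = t.subst σ' := by
  induction t using Term.ind with
  | hvar v => simpa using h v (by simp)
  | happ f ts ih =>
      simp only [subst_app]; congr 1
      exact List.map_congr_left fun t ht =>
        ih t ht fun v hv => h v (mem_vars_app.2 ⟨t, ht, hv⟩)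

theorem mem_vars_subst {σ : Subst V Fn} {t : Term V Fn} {x : V} :
    x ∈ (t.subst σ).vars ↔ ∃ v ∈ t.vars, x ∈ (σ v).vars := by
  induction t using Term.ind with
  | hvar v => simp
  | happ f ts ih =>
      simp only [subst_app, mem_vars_app, List.mem_map]
      constructor
      · rintro ⟨s, ⟨u, hu, rfl⟩, hx⟩
        obtain ⟨v, hv, hxv⟩ := (ih u hu).1 hx
        exact ⟨v, ⟨u, hu, hv⟩, hxv⟩
      · rintro ⟨v, ⟨u, hu, hvu⟩, hxv⟩
        exact ⟨u.subst σ, ⟨u, hu, rfl⟩, (ih u hu).2 ⟨v, hvu, hxv⟩⟩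

theorem vars_finite (t : Term V Fn) : t.vars.Finite := by
  induction t using Term.ind with
  | hvar v => simp
  | happ f ts ih =>
      have : (Term.app f ts).vars = ⋃ t ∈ {s | s ∈ ts}, Term.vars t := by
        ext x; simp [mem_vars_app]
      rw [this]
      exact Set.Finite.biUnion (List.finite_toSet ts) ih

def size : Term V Fn → ℕ
  | .var _ => 1
  | .app _ ts => 1 + (ts.attach.map (fun t => size t.1)).sum
  decreasing_by have := List.sizeOf_lt_of_mem t.2; simp at *; omega

@[simp] theorem size_var (v : V) : (Term.var v : Term V Fn).size = 1 := by simp [size]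

@[simp] theorem size_app (f : Fn) (ts : List (Term V Fn)) :
    (Term.app f ts).size = 1 + (ts.map size).sum := by
  rw [size]; simp [List.attach_map_val]

theorem size_pos (t : Term V Fn) : 0 < t.size := by
  cases t <;> simp

theorem size_le_subst {σ : Subst V Fn} {t : Term V Fn} {x : V} (hx : x ∈ t.vars) :
    (σ x).size ≤ (t.subst σ).size := by
  induction t using Term.ind with
  | hvar v => simp at hx; subst hx; simp
  | happ f ts ih =>
      obtain ⟨u, hu, hxu⟩ := mem_vars_app.1 hx
      have h1 : (u.subst σ).size ≤ ((ts.map (Term.subst σ)).map size).sum :=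
        List.single_le_sum (by simp) _ (by
          simp only [List.map_map]; exact List.mem_map.2 ⟨u, hu, rfl⟩)
      calc (σ x).size ≤ (u.subst σ).size := ih u hu hxu
        _ ≤ ((ts.map (Term.subst σ)).map Term.size).sum := h1
        _ ≤ ((Term.app f ts).subst σ).size := by rw [subst_app, size_app]; omega

theorem size_lt_subst_app {σ : Subst V Fn} {f : Fn} {ts : List (Term V Fn)} {x : V}
    (hx : x ∈ (Term.app f ts).vars) : (σ x).size < ((Term.app f ts).subst σ).size := by
  obtain ⟨u, hu, hxu⟩ := mem_vars_app.1 hx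
  have h1 : (u.subst σ).size ≤ ((ts.map (Term.subst σ)).map size).sum :=
    List.single_le_sum (by simp) _ (by
      simp only [List.map_map]; exact List.mem_map.2 ⟨u, hu, rfl⟩)
  have := size_le_subst (σ := σ) hxu
  simp only [subst_app, size_app]
  omega

end Term

section Unif
variable {V Fn : Type}

theorem Subst.comp_assoc (a b c : Subst V Fn) : (a.comp b).comp c = a.comp (b.comp c) := by
  funext v; simp [Subst.comp, Term.subst_subst]

@[simp] theorem Subst.var_comp (γ : Subst V Fn) : (Subst.comp (fun v => .var v) γ) = γ := by
  funext v; simp [Subst.comp]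

abbrev UProb (V Fn : Type) := List (Term V Fn × Term V Fn)

def Unifies (σ : Subst V Fn) (P : UProb V Fn) : Prop :=
  ∀ p ∈ P, p.1.subst σ = p.2.subst σ

def UMGU (σ : Subst V Fn) (P : UProb V Fn) : Prop :=
  Unifies σ P ∧ ∀ τ, Unifies τ P → ∃ γ, σ.comp γ = τ

def Pvars (P : UProb V Fn) : Set V := {x | ∃ p ∈ P, x ∈ p.1.vars ∪ p.2.vars}

theorem Pvars_finite (P : UProb V Fn) : (Pvars P).Finite := by
  have : Pvars P = ⋃ p ∈ {q | q ∈ P}, (p.1.vars ∪ p.2.vars) := by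
    ext x; simp [Pvars]
  rw [this]
  exact Set.Finite.biUnion (List.finite_toSet P)
    (fun p _ => (Term.vars_finite _).union (Term.vars_finite _))

def sizeP (P : UProb V Fn) : ℕ := (P.map (fun p => p.1.size + p.2.size)).sum

theorem map_eq_of_zip {α β : Type*} (f : α → β) :
    ∀ (l₁ l₂ : List α), l₁.length = l₂.length →
      (∀ q ∈ l₁.zip l₂, f q.1 = f q.2) → l₁.map f = l₂.map f
  | [], [], _, _ => rfl
  | a :: l₁, b :: l₂, hl, hq => by
      simp only [List.map_cons, List.cons.injEq]
      exact ⟨hq (a, b) (by simp), map_eq_of_zip f l₁ l₂ (by simpa using hl)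
        (fun q hq' => hq q (by simp [hq']))⟩

theorem zip_of_map_eq {α β : Type*} (f : α → β) :
    ∀ (l₁ l₂ : List α), l₁.map f = l₂.map f →
      ∀ q ∈ l₁.zip l₂, f q.1 = f q.2
  | [], _, _ => by simp
  | _ :: _, [], _ => by simp
  | a :: l₁, b :: l₂, h => by
      simp only [List.map_cons, List.cons.injEq] at h
      rintro q hq
      rcases (by simpa using hq : q = (a, b) ∨ q ∈ l₁.zip l₂) with rfl | hq'
      · exact h.1
      · exact zip_of_map_eq f l₁ l₂ h.2 q hq'

theorem sizeP_zip_le : ∀ (l₁ l₂ : List (Term V Fn)),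
    sizeP (l₁.zip l₂) ≤ (l₁.map Term.size).sum + (l₂.map Term.size).sum
  | [], _ => by simp [sizeP]
  | _ :: _, [] => by simp [sizeP]
  | a :: l₁, b :: l₂ => by
      have := sizeP_zip_le l₁ l₂
      simp only [List.zip_cons_cons, sizeP, List.map_cons, List.sum_cons] at *
      omega

theorem exists_umgu (P : UProb V Fn) (h : ∃ υ, Unifies υ P) : ∃ σ, UMGU σ P := by
  classical
  by_cases hall : ∀ p ∈ P, p.1 = p.2
  · refine ⟨fun v => .var v, fun p hp => by rw [hall p hp], fun τ _ => ⟨τ, by simp⟩⟩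
  · push_neg at hall
    obtain ⟨p, hp, hne⟩ := hall
    obtain ⟨υ, hυ⟩ := h
    -- helper for variable elimination
    have elim : ∀ (x : V) (t : Term V Fn), x ∉ t.vars → x ∈ Pvars P → t.vars ⊆ Pvars P →
        (∀ δ, Unifies δ P → δ x = t.subst δ) → ∃ σ, UMGU σ P := by
      intro x t hxt hxP htP hall
      set σx : Subst V Fn := fun v => if v = x then t else .var v with hσx
      set P₁ : UProb V Fn := P.map (fun q => (q.1.subst σx, q.2.subst σx)) with hP₁
      have f1 : ∀ δ, Unifies δ P → Subst.comp σx δ = δ := by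
        intro δ hδ; funext v
        by_cases hv : v = x
        · subst hv; simp [Subst.comp, hσx, (hall δ hδ).symm]
        · simp [Subst.comp, hσx, hv]
      have f2 : ∀ δ, Unifies δ P → Unifies δ P₁ := by
        rintro δ hδ q hq
        rw [hP₁, List.mem_map] at hq
        obtain ⟨q', hq', rfl⟩ := hq
        simp only [Term.subst_subst, f1 δ hδ]
        exact hδ q' hq'
      have f3 : ∀ δ, Unifies δ P₁ → Unifies (σx.comp δ) P := by
        rintro δ hδ q hq
        have := hδ (q.1.subst σx, q.2.subst σx) (List.mem_map.2 ⟨q, hq, rfl⟩)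
        simpa [Term.subst_subst] using this
      have hsub : Pvars P₁ ⊆ Pvars P \ {x} := by
        rintro y ⟨q, hq, hy⟩
        rw [hP₁, List.mem_map] at hq
        obtain ⟨q', hq', rfl⟩ := hq
        have key : ∀ u : Term V Fn, u.vars ⊆ Pvars P → y ∈ (u.subst σx).vars →
            y ∈ Pvars P \ {x} := by
          intro u hu hyu
          obtain ⟨v, hv, hyv⟩ := Term.mem_vars_subst.1 hyu
          by_cases hvx : v = x
          · subst hvx; rw [hσx] at hyv; simp at hyv
            exact ⟨htP hyv, fun hyx => hxt (hyx ▸ hyv)⟩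
          · rw [hσx] at hyv; simp [hvx] at hyv; subst hyv
            exact ⟨hu hv, hvx⟩
        rcases hy with hy | hy
        · exact key q'.1 (fun z hz => ⟨q', hq', Or.inl hz⟩) hy
        · exact key q'.2 (fun z hz => ⟨q', hq', Or.inr hz⟩) hy
      have hlt : (Pvars P₁).ncard < (Pvars P).ncard := by
        refine Set.ncard_lt_ncard ?_ (Pvars_finite P)
        exact hsub.trans_ssubset (Set.sdiff_singleton_ssubset.2 hxP)
      obtain ⟨σ', hσ'⟩ := exists_umgu P₁ ⟨υ, f2 υ hυ⟩
      refine ⟨σx.comp σ', f3 σ' hσ'.1, fun τ hτ => ?_⟩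
      obtain ⟨γ, hγ⟩ := hσ'.2 τ (f2 τ hτ)
      exact ⟨γ, by rw [Subst.comp_assoc, hγ, f1 τ hτ]⟩
    obtain ⟨s, t⟩ := p
    rcases s with x | ⟨f, ss⟩
    · -- s = var x
      by_cases hxu : x ∈ t.vars
      · exfalso
        cases t with
        | var y => simp at hxu; subst hxu; exact hne rfl
        | app f ts =>
            have h1 : υ x = (Term.app f ts).subst υ := by
              have := hυ _ hp; simpa using this
            have h2 := Term.size_lt_subst_app (σ := υ) hxu
            rw [← h1] at h2; exact lt_irrefl _ h2
      · exact elim x t hxu ⟨(Term.var x, t), hp, by simp⟩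
          (fun z hz => ⟨(Term.var x, t), hp, Or.inr hz⟩)
          (fun δ hδ => by have := hδ _ hp; simpa using this)
    · rcases t with y | ⟨g, ts⟩
      · -- t = var y
        by_cases hxs : y ∈ (Term.app f ss).vars
        · exfalso
          have h1 : υ y = (Term.app f ss).subst υ := by
            have := hυ _ hp; simpa using this.symm
          have h2 := Term.size_lt_subst_app (σ := υ) hxs
          rw [← h1] at h2; exact lt_irrefl _ h2
        · exact elim y (Term.app f ss) hxs ⟨(Term.app f ss, Term.var y), hp, by simp⟩
            (fun z hz => ⟨(Term.app f ss, Term.var y), hp, Or.inl hz⟩)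
            (fun δ hδ => by have := hδ _ hp; simpa using this.symm)
      · -- decompose
        have hfg : f = g ∧ ss.map (Term.subst υ) = ts.map (Term.subst υ) := by
          have := hυ _ hp; simpa [Term.app.injEq] using this
        obtain ⟨rfl, hmap⟩ := hfg
        have hlen : ss.length = ts.length := by
          have := congrArg List.length hmap; simpa using this
        obtain ⟨P₁', P₂', hPeq⟩ := List.append_of_mem hp
        have hmemP : ∀ q, q ∈ P ↔ (q = (Term.app f ss, Term.app f ts) ∨ q ∈ P₁' ∨ q ∈ P₂') := by
          intro q; rw [hPeq]; simp; tauto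
        have equiv : ∀ δ, Unifies δ (ss.zip ts ++ (P₁' ++ P₂')) ↔ Unifies δ P := by
          intro δ; constructor
          · intro hδ q hq
            rcases (hmemP q).1 hq with h | h | h
            · subst h
              simp only [Term.subst_app, Term.app.injEq, true_and]
              exact map_eq_of_zip _ ss ts hlen fun q hq => hδ q (by simp [hq])
            · exact hδ q (by simp [h])
            · exact hδ q (by simp [h])
          · intro hδ q hq
            rcases (by simpa using hq :
                (q ∈ ss.zip ts) ∨ q ∈ P₁' ∨ q ∈ P₂') with h | h | h
            · have hpair := hδ (Term.app f ss, Term.app f ts) hp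
              have : ss.map (Term.subst δ) = ts.map (Term.subst δ) := by
                simpa [Term.app.injEq] using hpair
              exact zip_of_map_eq _ ss ts this q h
            · exact hδ q ((hmemP q).2 (Or.inr (Or.inl h)))
            · exact hδ q ((hmemP q).2 (Or.inr (Or.inr h)))
        have hvsub : Pvars (ss.zip ts ++ (P₁' ++ P₂')) ⊆ Pvars P := by
          rintro y ⟨q, hq, hy⟩
          rcases (by simpa using hq :
              (q ∈ ss.zip ts) ∨ q ∈ P₁' ∨ q ∈ P₂') with h | h | h
          · obtain ⟨h1, h2⟩ := List.of_mem_zip h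
            refine ⟨(Term.app f ss, Term.app f ts), hp, ?_⟩
            rcases hy with hy | hy
            · exact Or.inl (Term.mem_vars_app.2 ⟨q.1, h1, hy⟩)
            · exact Or.inr (Term.mem_vars_app.2 ⟨q.2, h2, hy⟩)
          · exact ⟨q, (hmemP q).2 (Or.inr (Or.inl h)), hy⟩
          · exact ⟨q, (hmemP q).2 (Or.inr (Or.inr h)), hy⟩
        have hnle : (Pvars (ss.zip ts ++ (P₁' ++ P₂'))).ncard ≤ (Pvars P).ncard :=
          Set.ncard_le_ncard hvsub (Pvars_finite _)
        have hsz : sizeP (ss.zip ts ++ (P₁' ++ P₂')) < sizeP P := by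
          have hzip := sizeP_zip_le ss ts
          rw [hPeq]
          simp only [sizeP, List.map_append, List.sum_append, List.map_cons,
            List.sum_cons, Term.size_app] at *
          omega
        obtain ⟨σ', hσ'⟩ := exists_umgu (ss.zip ts ++ (P₁' ++ P₂')) ⟨υ, (equiv υ).2 hυ⟩
        exact ⟨σ', (equiv σ').1 hσ'.1, fun τ hτ => hσ'.2 τ ((equiv τ).2 hτ)⟩
termination_by ((Pvars P).ncard, sizeP P)
decreasing_by
  · exact Prod.Lex.left _ _ hlt
  · rcases lt_or_eq_of_le hnle with h | h
    · exact Prod.Lex.left _ _ h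
    · exact h ▸ Prod.Lex.right _ hsz
end Unif

section Lits
variable {V Fn P : Type}

theorem Lit.subst_subst (σ γ : Subst V Fn) (l : Lit V Fn P) :
    (l.subst σ).subst γ = l.subst (σ.comp γ) := by
  simp [Lit.subst, Atom.subst, List.map_map, Function.comp_def, Term.subst_subst]

theorem Clause.subst_subst (σ γ : Subst V Fn) (C : Clause V Fn P) :
    (C.subst σ).subst γ = C.subst (σ.comp γ) := by
  simp [Clause.subst, Multiset.map_map, Function.comp_def, Lit.subst_subst]

theorem Lit.subst_congr {σ σ' : Subst V Fn} {l : Lit V Fn P}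
    (h : ∀ v ∈ l.vars, σ v = σ' v) : l.subst σ = l.subst σ' := by
  simp only [Lit.subst, Atom.subst, Lit.mk.injEq, Atom.mk.injEq, true_and]
  exact List.map_congr_left fun t ht => Term.subst_congr fun v hv => h v ⟨t, ht, hv⟩

theorem Lit.compl_subst (σ : Subst V Fn) (l : Lit V Fn P) :
    (l.compl).subst σ = (l.subst σ).compl := by
  simp [Lit.compl, Lit.subst]

/-- Existence of MGUs for lists of literals admitting a unifier. -/
theorem exists_mgu_lits (ls : List (Lit V Fn P)) (h : ∃ υ, IsUnifier υ ls) :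
    ∃ σ, IsMGU σ ls := by
  obtain ⟨υ, hυ⟩ := h
  cases ls with
  | nil => exact ⟨fun v => .var v, by simp [IsUnifier], fun τ _ => ⟨τ, by simp⟩⟩
  | cons l₀ rest =>
    set ls := l₀ :: rest with hls
    have hfacts : ∀ l ∈ ls, l.pol = l₀.pol ∧ l.atom.pred = l₀.atom.pred ∧
        l.atom.args.length = l₀.atom.args.length := by
      intro l hl
      have hLit := hυ l hl l₀ (by simp [hls])
      have hp : l.pol = l₀.pol := by
        have := congrArg Lit.pol hLit; simpa [Lit.subst] using this
      have ha : l.atom.subst υ = l₀.atom.subst υ := by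
        have := congrArg Lit.atom hLit; simpa [Lit.subst] using this
      refine ⟨hp, ?_, ?_⟩
      · have := congrArg Atom.pred ha; simpa [Atom.subst] using this
      · have := congrArg (fun A => A.args.length) ha
        simpa [Atom.subst] using this
    set Q : UProb V Fn := ls.flatMap (fun l => l₀.atom.args.zip l.atom.args) with hQ
    have key : ∀ δ, Unifies δ Q ↔ IsUnifier δ ls := by
      intro δ
      constructor
      · intro hδ
        have heach : ∀ l ∈ ls, l.subst δ = l₀.subst δ := by
          intro l hl
          obtain ⟨hp, hpr, hlen⟩ := hfacts l hl
          have hzip : ∀ q ∈ l₀.atom.args.zip l.atom.args,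
              q.1.subst δ = q.2.subst δ := by
            intro q hq
            exact hδ q (List.mem_flatMap.2 ⟨l, hl, hq⟩)
          have : l₀.atom.args.map (Term.subst δ) = l.atom.args.map (Term.subst δ) :=
            map_eq_of_zip _ _ _ hlen.symm hzip
          simp [Lit.subst, Atom.subst, hp, hpr, this]
        intro l₁ h₁ l₂ h₂
        rw [heach l₁ h₁, heach l₂ h₂]
      · intro hδ q hq
        obtain ⟨l, hl, hq'⟩ := List.mem_flatMap.1 hq
        have := hδ l₀ (by simp [hls]) l hl
        have hmaps : l₀.atom.args.map (Term.subst δ) = l.atom.args.map (Term.subst δ) := by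
          have := congrArg (fun m => m.atom.args) this
          simpa [Lit.subst, Atom.subst] using this
        exact zip_of_map_eq _ _ _ hmaps q hq'
    obtain ⟨σ, hσ⟩ := exists_umgu Q ⟨υ, (key υ).2 hυ⟩
    exact ⟨σ, (key σ).1 hσ.1, fun τ hτ => hσ.2 τ ((key τ).2 hτ)⟩

end Lits

section Main
variable {V Fn P : Type}

theorem Clause.mem_subst {σ : Subst V Fn} {C : Clause V Fn P} {l : Lit V Fn P} :
    l ∈ Clause.subst σ C ↔ ∃ N ∈ C, N.subst σ = l := Multiset.mem_map

theorem Clause.subst_cons (σ : Subst V Fn) (l : Lit V Fn P) (C : Clause V Fn P) :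
    Clause.subst σ (l ::ₘ C) = l.subst σ ::ₘ C.subst σ := Multiset.map_cons _ _ _

/-- Key lemma: flipping the blocked atom preserves satisfaction of instances of other
clauses of `F`. -/
theorem key_preserve (F : Set (Clause V Fn P)) (L : Lit V Fn P) (C' : Clause V Fn P)
    (hdisj : ∀ D ∈ F, D ≠ L ::ₘ C' → Clause.vars (L ::ₘ C') ∩ Clause.vars D = ∅)
    (hbl : BlockedEF L C' F)
    (β : PAssign V Fn P) (τ : Subst V Fn)
    (hG : ¬ satC β (Clause.subst τ (L ::ₘ C')))
    (D : Clause V Fn P) (hD : D ∈ F) (hDne : D ≠ L ::ₘ C') (τ' : Subst V Fn)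
    (hH : satC β (Clause.subst τ' D)) :
    satC (flipAtom β (L.atom.subst τ)) (Clause.subst τ' D) := by
  classical
  set A0 := L.atom.subst τ with hA0
  set β' := flipAtom β A0 with hβ'
  obtain ⟨l, hl, hlt⟩ := hH
  by_cases hla : l.atom = A0
  case neg =>
    refine ⟨l, hl, ?_⟩
    simpa [litTrue, hβ', flipAtom, if_neg hla] using hlt
  case pos =>
  have hLfalse : β A0 ≠ L.pol := by
    intro hb
    refine hG ⟨L.subst τ, ?_, ?_⟩
    · rw [Clause.subst_cons]; exact Multiset.mem_cons_self _ _
    · simpa [litTrue, Lit.subst] using hb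
  have hbA0 : β A0 = !L.pol := by
    cases h1 : β A0 <;> cases h2 : L.pol <;> simp_all
  have hlform : l = ⟨!L.pol, A0⟩ := by
    have : β l.atom = l.pol := hlt
    rw [hla, hbA0] at this
    cases l with | mk pol atom => simp_all
  obtain ⟨N₀, hN₀D, hN₀⟩ := Clause.mem_subst.1 hl
  set Ns := D.filter (fun N => Lit.subst τ' N = (⟨!L.pol, A0⟩ : Lit V Fn P)) with hNsd
  set Dr := D.filter (fun N => ¬ Lit.subst τ' N = (⟨!L.pol, A0⟩ : Lit V Fn P)) with hDrd
  have hsplit : Ns + Dr = D := Multiset.filter_add_not _ _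
  have hNs0 : Ns ≠ 0 := by
    intro h0
    have hmem : N₀ ∈ Ns := Multiset.mem_filter.2 ⟨hN₀D, by rw [hN₀, hlform]⟩
    rw [h0] at hmem; simp at hmem
  set τ₀ : Subst V Fn := fun v => if v ∈ Clause.vars (L ::ₘ C') then τ v else τ' v with hτ₀
  have hvC := hdisj D hD hDne
  have hCsub : ∀ l' ∈ (L ::ₘ C'), Lit.subst τ₀ l' = Lit.subst τ l' := fun l' hl' =>
    Lit.subst_congr fun v hv => if_pos ⟨l', hl', hv⟩
  have hDsub : ∀ N ∈ D, Lit.subst τ₀ N = Lit.subst τ' N := fun N hN =>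
    Lit.subst_congr fun v hv => if_neg (fun hvC' => by
      have : v ∈ Clause.vars (L ::ₘ C') ∩ Clause.vars D := ⟨hvC', N, hN, hv⟩
      rw [hvC] at this; exact this)
  have hval : ∀ m ∈ L :: (Ns.map Lit.compl).toList,
      m.subst τ₀ = (⟨L.pol, A0⟩ : Lit V Fn P) := by
    intro m hm
    rcases List.mem_cons.1 hm with rfl | hm
    · rw [hCsub m (Multiset.mem_cons_self _ _)]; simp [Lit.subst, hA0]
    · obtain ⟨N, hN, rfl⟩ := Multiset.mem_map.1 (Multiset.mem_toList.1 hm)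
      have hND : N ∈ D := (Multiset.mem_filter.1 hN).1
      have hNval : Lit.subst τ' N = (⟨!L.pol, A0⟩ : Lit V Fn P) :=
        (Multiset.mem_filter.1 hN).2
      rw [Lit.compl_subst, hDsub N hND, hNval]
      simp [Lit.compl]
  have hunif : IsUnifier τ₀ (L :: (Ns.map Lit.compl).toList) := by
    intro l₁ h₁ l₂ h₂; rw [hval l₁ h₁, hval l₂ h₂]
  obtain ⟨σ, hσ⟩ := exists_mgu_lits _ ⟨τ₀, hunif⟩
  have hvalid := hbl D hD hDne Ns Dr hsplit hNs0 σ hσ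
  obtain ⟨γ, hγ⟩ := hσ.2 τ₀ hunif
  obtain ⟨A, hA1, hA2⟩ := hvalid
  have hmem : ∀ b : Bool, (⟨b, A⟩ : Lit V Fn P) ∈ C'.subst σ + Clause.subst σ Dr →
      (⟨b, A.subst γ⟩ : Lit V Fn P) ∈ C'.subst τ₀ + Clause.subst τ₀ Dr := by
    intro b hb
    have h1 : Lit.subst γ ⟨b, A⟩ ∈ (C'.subst σ + Clause.subst σ Dr).map (Lit.subst γ) :=
      Multiset.mem_map_of_mem _ hb
    rw [Multiset.map_add] at h1
    have e1 : (C'.subst σ).map (Lit.subst γ) = C'.subst τ₀ := by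
      show (C'.subst σ).subst γ = _
      rw [Clause.subst_subst, hγ]
    have e2 : (Clause.subst σ Dr).map (Lit.subst γ) = Clause.subst τ₀ Dr := by
      show (Clause.subst σ Dr).subst γ = _
      rw [Clause.subst_subst, hγ]
    rw [e1, e2] at h1
    simpa [Lit.subst] using h1
  set A' := A.subst γ with hA'
  set mt : Lit V Fn P := ⟨β A', A'⟩ with hmt'
  have hmt : litTrue β mt := rfl
  have hmem' : mt ∈ C'.subst τ₀ + Clause.subst τ₀ Dr := by
    cases hb : β A'
    · have := hmem false hA2; rw [hmt', hb]; exact this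
    · have := hmem true hA1; rw [hmt', hb]; exact this
  rcases Multiset.mem_add.1 hmem' with hmC | hmD
  · exfalso
    have e3 : C'.subst τ₀ = C'.subst τ :=
      Multiset.map_congr rfl fun l' hl' => hCsub l' (Multiset.mem_cons_of_mem hl')
    refine hG ⟨mt, ?_, hmt⟩
    rw [Clause.subst_cons]
    exact Multiset.mem_cons_of_mem (e3 ▸ hmC)
  · have e4 : Clause.subst τ₀ Dr = Clause.subst τ' Dr :=
      Multiset.map_congr rfl fun N hN =>
        hDsub N (by rw [← hsplit]; exact Multiset.mem_add.2 (Or.inr hN))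
    rw [e4] at hmD
    obtain ⟨N, hNDr, hNe⟩ := Clause.mem_subst.1 hmD
    have hND : N ∈ D := by rw [← hsplit]; exact Multiset.mem_add.2 (Or.inr hNDr)
    have hmtH : mt ∈ Clause.subst τ' D := Clause.mem_subst.2 ⟨N, hND, hNe⟩
    have hmtA : mt.atom ≠ A0 := by
      intro he
      have hfilter := (Multiset.mem_filter.1 hNDr).2
      apply hfilter
      rw [hNe]
      have hAe : A' = A0 := he
      rw [hmt', hAe, hbA0]
    exact ⟨mt, hmtH, by simpa [litTrue, hβ', flipAtom, if_neg hmtA] using hmt⟩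

end Main

theorem stmt6' {V Fn P : Type} (F : Set (Clause V Fn P)) (L : Lit V Fn P) (C' : Clause V Fn P)
    (hdisj : ∀ D ∈ F, D ≠ L ::ₘ C' → Clause.vars (L ::ₘ C') ∩ Clause.vars D = ∅)
    (hbl : BlockedEF L C' F)
    (F' FC : Set (Clause V Fn P))
    (hF' : F'.Finite ∧ ∀ G ∈ F', G.IsGround ∧ ∃ D ∈ F, D ≠ L ::ₘ C' ∧ ∃ τ, G = Clause.subst τ D)
    (hFC : FC.Finite ∧ ∀ G ∈ FC, G.IsGround ∧ ∃ τ, G = Clause.subst τ (L ::ₘ C'))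
    (α : PAssign V Fn P) (hα : ∀ G ∈ F', satC α G) :
    ∃ α' : PAssign V Fn P,
      (∀ G ∈ F' ∪ FC, satC α' G) ∧
      ∀ A : Atom V Fn P, (∀ δ : Subst V Fn, A ≠ L.atom.subst δ) → α' A = α A := by
  classical
  have hinst : ∀ G ∈ FC, ∃ τ, G = Clause.subst τ (L ::ₘ C') := fun G hG => (hFC.2 G hG).2
  haveI : Nonempty (Subst V Fn) := ⟨fun v => Term.var v⟩
  choose! τf hτf using hinst
  set T : Set (Atom V Fn P) := (fun G => L.atom.subst (τf G)) '' FC with hT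
  have hTfin : T.Finite := hFC.1.image _
  have loop : ∀ (n : ℕ) (β : PAssign V Fn P), (∀ G ∈ F', satC β G) →
      (∀ A, (∀ δ : Subst V Fn, A ≠ L.atom.subst δ) → β A = α A) →
      ({A ∈ T | β A ≠ L.pol}).ncard ≤ n →
      ∃ β', (∀ G ∈ F', satC β' G) ∧ (∀ G ∈ FC, satC β' G) ∧
        (∀ A, (∀ δ : Subst V Fn, A ≠ L.atom.subst δ) → β' A = α A) := by
    intro n
    induction n using Nat.strong_induction_on with
    | _ n ih =>
      intro β hβF' hβagree hβn
      by_cases hsat : ∀ G ∈ FC, satC β G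
      · exact ⟨β, hβF', hsat, hβagree⟩
      · push_neg at hsat
        obtain ⟨G, hGFC, hGns⟩ := hsat
        have hGeq : G = Clause.subst (τf G) (L ::ₘ C') := hτf G hGFC
        set τ := τf G with hτdef
        set A0 := L.atom.subst τ with hA0
        have hA0T : A0 ∈ T := ⟨G, hGFC, rfl⟩
        have hLfalse : β A0 ≠ L.pol := by
          intro hb
          refine hGns ⟨L.subst τ, ?_, ?_⟩
          · rw [hGeq, Clause.subst_cons]; exact Multiset.mem_cons_self _ _
          · simpa [litTrue, Lit.subst] using hb
        set β' := flipAtom β A0 with hβ'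
        have hβ'A0 : β' A0 = L.pol := by
          rw [hβ']; unfold flipAtom; rw [if_pos rfl]
          cases hb : β A0 <;> cases hp : L.pol <;> simp [hb, hp] at hLfalse ⊢
        have hβ'F' : ∀ H ∈ F', satC β' H := by
          intro H hH
          obtain ⟨-, D, hD, hDne, τ', rfl⟩ := hF'.2 H hH
          exact key_preserve F L C' hdisj hbl β τ (hGeq ▸ hGns) D hD hDne τ' (hβF' _ hH)
        have hβ'agree : ∀ A, (∀ δ : Subst V Fn, A ≠ L.atom.subst δ) → β' A = α A := by
          intro A hA
          have : A ≠ A0 := hA τ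
          rw [hβ']; unfold flipAtom; rw [if_neg this]
          exact hβagree A hA
        have hsub : {A ∈ T | β' A ≠ L.pol} ⊆ {A ∈ T | β A ≠ L.pol} \ {A0} := by
          rintro A ⟨hAT, hA⟩
          have hne : A ≠ A0 := by
            intro he; rw [he, hβ'A0] at hA; exact hA rfl
          refine ⟨⟨hAT, ?_⟩, hne⟩
          rwa [hβ', flipAtom, if_neg hne] at hA
        have hA0mem : A0 ∈ {A ∈ T | β A ≠ L.pol} := ⟨hA0T, hLfalse⟩
        have hfin : ({A ∈ T | β A ≠ L.pol}).Finite := hTfin.subset (Set.sep_subset _ _)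
        have hlt : ({A ∈ T | β' A ≠ L.pol}).ncard < ({A ∈ T | β A ≠ L.pol}).ncard :=
          lt_of_le_of_lt (Set.ncard_le_ncard hsub hfin.diff)
            (Set.ncard_diff_singleton_lt_of_mem hA0mem hfin)
        have hnpos : ({A ∈ T | β' A ≠ L.pol}).ncard < n := lt_of_lt_of_le hlt hβn
        exact ih _ hnpos β' hβ'F' hβ'agree (le_refl _)
  obtain ⟨β', h1, h2, h3⟩ := loop (({A ∈ T | α A ≠ L.pol}).ncard) α hα (fun _ _ => rfl)
    (le_refl _)
  refine ⟨β', fun G hG => ?_, h3⟩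
  rcases hG with hG | hG
  · exact h1 G hG
  · exact h2 G hG



/-- If `C = L ∨ C'` is blocked by `L` in `F`, `F'` a finite set of ground instances of clauses
of `F \ {C}` and `FC` a finite set of ground instances of `C`, then every propositional
assignment satisfying `F'` can be modified — changing only ground instances of the atom of
`L` — into one satisfying `F' ∪ FC`. -/
theorem stmt6 {V Fn P : Type} (F : Set (Clause V Fn P)) (L : Lit V Fn P) (C' : Clause V Fn P)
    (hdisj : ∀ D ∈ F, D ≠ L ::ₘ C' → Clause.vars (L ::ₘ C') ∩ Clause.vars D = ∅)
    (hbl : BlockedEF L C' F)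
    (F' FC : Set (Clause V Fn P))
    (hF' : F'.Finite ∧ ∀ G ∈ F', G.IsGround ∧ ∃ D ∈ F, D ≠ L ::ₘ C' ∧ ∃ τ, G = Clause.subst τ D)
    (hFC : FC.Finite ∧ ∀ G ∈ FC, G.IsGround ∧ ∃ τ, G = Clause.subst τ (L ::ₘ C'))
    (α : PAssign V Fn P) (hα : ∀ G ∈ F', satC α G) :
    ∃ α' : PAssign V Fn P,
      (∀ G ∈ F' ∪ FC, satC α' G) ∧
      ∀ A : Atom V Fn P, (∀ δ : Subst V Fn, A ≠ L.atom.subst δ) → α' A = α A :=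
  stmt6' F L C' hdisj hbl F' FC hF' hFC α hα
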